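/- Let f be the unimodal map with branches f₀ (decreasing on [0,ρ]) and f₁(x) = (x−ρ)/(1−ρ) on (ρ,1], and let x̃₀ = (f^n(0), f^{n−1}(0), ..., f(0), 0, x_{n+1}, x_{n+2}, ...) ∈ X̃ with x_{n+1} = f₀^{-1}(0) = ρ. If T, T' ∈ {0,1}^ℕ agree except at index n, where T(n) = 0 and T'(n) = 1, then every neighborhood of x̃₀ in X̃ contains a nonempty subset of X̃_{T'}; in particular X̃_T ∪ X̃_{T'} is a connected subspace of X̃ (provided X̃_T and X̃_{T'} are nonempty intervals with x̃₀ ∈ X̃_T a common limit). -/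

import Mathlib

open Filter Topology Set

/-- If `f` is continuous and injective on a compact interval, then it is inverse-continuous:
a sequence in the interval whose images converge to the image of a point of the interval
converges to that point. -/
lemma inv_cont_aux {f : ℝ → ℝ} {a b : ℝ}
    (hc : ContinuousOn f (Set.Icc a b)) (hinj : Set.InjOn f (Set.Icc a b))
    {u : ℕ → ℝ} {x : ℝ} (hu : ∀ m, u m ∈ Set.Icc a b) (hx : x ∈ Set.Icc a b)
    (hf : Tendsto (fun m => f (u m)) atTop (𝓝 (f x))) :
    Tendsto u atTop (𝓝 x) := by
  let F : Set.Icc a b → ℝ := (Set.Icc a b).restrict f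
  have hF : Continuous F := hc.restrict
  have hFi : Function.Injective F := fun p q h => Subtype.ext (hinj p.2 q.2 h)
  have hemb := (hF.isClosedEmbedding hFi).isEmbedding
  have h1 : Tendsto (fun m => (⟨u m, hu m⟩ : Set.Icc a b)) atTop (𝓝 ⟨x, hx⟩) := by
    rw [hemb.tendsto_nhds_iff]
    exact hf
  exact (continuous_subtype_val.tendsto _).comp h1

lemma fin_two_cases (v : Fin 2) : v = 0 ∨ v = 1 := by omega

/-- The set of backward orbits of `f` in `[0,1]` whose branch choices follow the
type `T` (value `0` means the left branch `[0,ρ]`, value `1` the right branch `(ρ,1]`). -/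
def typeSet (f : ℝ → ℝ) (ρ : ℝ) (T : ℕ → Fin 2) : Set (ℕ → ℝ) :=
  {x | (∀ n, x n ∈ Set.Icc (0:ℝ) 1) ∧ (∀ n, f (x (n + 1)) = x n) ∧
    ∀ n, (T n = 0 → x (n + 1) ∈ Set.Icc 0 ρ) ∧ (T n = 1 → x (n + 1) ∈ Set.Ioc ρ 1)}

theorem cement_lemma (ρ : ℝ) (hρ : 0 < ρ) (hρ1 : ρ < 1)
    (f : ℝ → ℝ) (hcont : ContinuousOn f (Set.Icc 0 1))
    (hmaps : Set.MapsTo f (Set.Icc 0 1) (Set.Icc 0 1))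
    (hanti : StrictAntiOn f (Set.Icc 0 ρ)) (hfρ : f ρ = 0)
    (hright : ∀ x ∈ Set.Ioc ρ 1, f x = (x - ρ) / (1 - ρ))
    (T T' : ℕ → Fin 2) (n : ℕ)
    (hagree : ∀ k, k ≠ n → T' k = T k) (hTn : T n = 0) (hT'n : T' n = 1)
    (x₀ : ℕ → ℝ) (hx₀ : x₀ ∈ typeSet f ρ T) (hx₀n : x₀ n = 0)
    (hTconn : IsPreconnected (typeSet f ρ T))
    (hT'conn : IsPreconnected (typeSet f ρ T'))
    (hT'ne : (typeSet f ρ T').Nonempty) :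
    x₀ ∈ closure (typeSet f ρ T') ∧
      IsConnected (typeSet f ρ T ∪ typeSet f ρ T') := by
  obtain ⟨y, hy⟩ := hT'ne
  have hx₀' := hx₀
  have hy' := hy
  obtain ⟨hx1, hx2, hx3⟩ := hx₀
  obtain ⟨hy1, hy2, hy3⟩ := hy
  have hρ1' : (0:ℝ) < 1 - ρ := by linarith
  have hIccρ : Set.Icc (0:ℝ) ρ ⊆ Set.Icc (0:ℝ) 1 := Set.Icc_subset_Icc le_rfl hρ1.le
  have hinj0 : Set.InjOn f (Set.Icc 0 ρ) := hanti.injOn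
  -- on the right branch, x is recovered from its image
  have hbr1 : ∀ x ∈ Set.Ioc ρ 1, x = ρ + f x * (1 - ρ) := by
    intro x hx
    rw [hright x hx]
    field_simp
    ring
  have hpos1 : ∀ x ∈ Set.Ioc ρ 1, 0 < f x := by
    intro x hx
    rw [hright x hx]
    exact div_pos (by linarith [hx.1]) hρ1'
  -- x₀ (n+1) = ρ
  have hx₀n1 : x₀ (n + 1) = ρ := by
    apply hinj0 ((hx3 n).1 hTn) ⟨hρ.le, le_rfl⟩
    rw [hx2 n, hx₀n, hfρ]
  have hyn1 : y (n + 1) ∈ Set.Ioc ρ 1 := (hy3 n).2 hT'n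
  have hynpos : 0 < y n := by rw [← hy2 n]; exact hpos1 _ hyn1
  -- x₀ and y differ at every index ≤ n, in particular at 0
  have claim : ∀ j k, k + j = n → x₀ k = y k → x₀ n = y n := by
    intro j
    induction j with
    | zero =>
      intro k hk he
      have : k = n := by omega
      rwa [this] at he
    | succ j ih =>
      intro k hk he
      have hkn : k ≠ n := by omega
      have hTT : T' k = T k := hagree k hkn
      apply ih (k + 1) (by omega)
      rcases fin_two_cases (T k) with h | h
      · exact hinj0 ((hx3 k).1 h) ((hy3 k).1 (hTT.trans h))
          (by rw [hx2 k, hy2 k, he])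
      · have ea := hbr1 _ ((hx3 k).2 h)
        have eb := hbr1 _ ((hy3 k).2 (hTT.trans h))
        rw [hx2 k] at ea
        rw [hy2 k] at eb
        rw [ea, eb, he]
  have hne0 : x₀ 0 ≠ y 0 := by
    intro he
    have := claim n 0 (by omega) he
    rw [hx₀n] at this
    exact hynpos.ne this
  -- branch formulas for x₀ at any index (used for branch-1 limits)
  have hx₀lin : ∀ k, T' k = 1 → x₀ (k + 1) = ρ + x₀ k * (1 - ρ) := by
    intro k hk
    by_cases hkn : k = n
    · subst hkn
      rw [hx₀n1, hx₀n]
      ring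
    · have hTk : T k = 1 := (hagree k hkn).symm.trans hk
      have := hbr1 _ ((hx3 k).2 hTk)
      rwa [hx2 k] at this
  have hylin : ∀ k, T' k = 1 → y (k + 1) = ρ + y k * (1 - ρ) := by
    intro k hk
    have := hbr1 _ ((hy3 k).2 hk)
    rwa [hy2 k] at this
  -- the invariant carried along the construction
  set P : ℕ → ℝ → Prop := fun k r => r ∈ Set.uIcc (x₀ k) (y k) ∧ r ≠ x₀ k with hP
  have uIccsub : ∀ k, Set.uIcc (x₀ k) (y k) ⊆ Set.Icc (0:ℝ) 1 :=
    fun k => Set.uIcc_subset_Icc (hx1 k) (hy1 k)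
  -- the key branch-inverse existence step
  have key : ∀ k r, P k r → ∃ s, P (k + 1) s ∧ f s = r ∧
      (T' k = 0 → s ∈ Set.Icc 0 ρ) ∧ (T' k = 1 → s ∈ Set.Ioc ρ 1) ∧
      (T' k = 1 → s = ρ + r * (1 - ρ)) := by
    intro k r hr
    rcases fin_two_cases (T' k) with h | h
    · -- left branch
      have hkn : k ≠ n := by intro hkn; rw [hkn, hT'n] at h; exact absurd h (by decide)
      have hTk : T k = 0 := (hagree k hkn).symm.trans h
      have hxk1 : x₀ (k + 1) ∈ Set.Icc 0 ρ := (hx3 k).1 hTk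
      have hyk1 : y (k + 1) ∈ Set.Icc 0 ρ := (hy3 k).1 h
      have hsub : Set.uIcc (x₀ (k + 1)) (y (k + 1)) ⊆ Set.Icc 0 ρ :=
        Set.uIcc_subset_Icc hxk1 hyk1
      have hc' : ContinuousOn f (Set.uIcc (x₀ (k + 1)) (y (k + 1))) :=
        hcont.mono (hsub.trans hIccρ)
      have hmem : r ∈ Set.uIcc (f (x₀ (k + 1))) (f (y (k + 1))) := by
        rw [hx2 k, hy2 k]; exact hr.1
      obtain ⟨s, hs, hfs⟩ := intermediate_value_uIcc hc' hmem
      refine ⟨s, ⟨hs, ?_⟩, hfs, fun _ => hsub hs, fun h1 => ?_, fun h1 => ?_⟩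
      · intro hse
        apply hr.2
        rw [← hfs, hse, hx2 k]
      · rw [h] at h1; exact absurd h1 (by decide)
      · rw [h] at h1; exact absurd h1 (by decide)
    · -- right branch
      have hrpos : 0 < r := by
        rcases lt_or_eq_of_le (((uIccsub k) hr.1).1) with h' | h'
        · exact h'
        · exfalso
          by_cases hkn : k = n
          · exact hr.2 (by rw [← h', hkn, hx₀n])
          · have hTk : T k = 1 := (hagree k hkn).symm.trans h
            have hx₀pos : 0 < x₀ k := by
              rw [← hx2 k]; exact hpos1 _ ((hx3 k).2 hTk)
            have hypos : 0 < y k := by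
              rw [← hy2 k]; exact hpos1 _ ((hy3 k).2 h)
            rcases Set.mem_uIcc.1 hr.1 with ⟨h1, _⟩ | ⟨h1, _⟩ <;> rw [← h'] at h1 <;>
              linarith
      have hrle : r ≤ 1 := ((uIccsub k) hr.1).2
      refine ⟨ρ + r * (1 - ρ), ⟨?_, ?_⟩, ?_, fun h0 => ?_, fun _ => ?_, fun _ => rfl⟩
      · -- membership in uIcc
        have ex : x₀ (k + 1) = ρ + x₀ k * (1 - ρ) := hx₀lin k h
        have ey : y (k + 1) = ρ + y k * (1 - ρ) := hylin k h
        rw [ex, ey]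
        rcases Set.mem_uIcc.1 hr.1 with ⟨h1, h2⟩ | ⟨h1, h2⟩
        · exact Set.mem_uIcc.2 (Or.inl ⟨by nlinarith, by nlinarith⟩)
        · exact Set.mem_uIcc.2 (Or.inr ⟨by nlinarith, by nlinarith⟩)
      · intro hse
        apply hr.2
        rw [hx₀lin k h] at hse
        have : r * (1 - ρ) = x₀ k * (1 - ρ) := by linarith
        exact mul_right_cancel₀ hρ1'.ne' this
      · -- f s = r
        rw [hright _ ⟨by nlinarith, by nlinarith⟩]
        field_simp
        ring
      · rw [h] at h0; exact absurd h0 (by decide)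
      · -- s ∈ Ioc ρ 1
        exact ⟨by nlinarith, by nlinarith⟩
  choose g hgP hgf hg0 hg1 hglin using key
  -- base point of the construction
  have base : ∀ m : ℕ, P 0 (x₀ 0 + (y 0 - x₀ 0) / ((m : ℝ) + 1)) := by
    intro m
    have hm : (0:ℝ) < (m : ℝ) + 1 := by positivity
    have hm1 : ((m : ℝ) + 1)⁻¹ ≤ 1 := by
      rw [inv_le_one_iff₀]; right; linarith
    have hm0 : (0:ℝ) < ((m : ℝ) + 1)⁻¹ := by positivity
    constructor
    · rw [div_eq_mul_inv]
      rcases hne0.lt_or_gt with h | h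
      · exact Set.mem_uIcc.2 (Or.inl ⟨by nlinarith, by nlinarith⟩)
      · exact Set.mem_uIcc.2 (Or.inr ⟨by nlinarith, by nlinarith⟩)
    · intro he
      have : (y 0 - x₀ 0) / ((m : ℝ) + 1) = 0 := by linarith
      have := div_eq_zero_iff.1 this
      rcases this with h | h
      · exact hne0 (by linarith)
      · linarith
  -- recursive construction of the approximating orbits
  let Z : ℕ → ∀ k, {r : ℝ // P k r} := fun m =>
    Nat.rec ⟨x₀ 0 + (y 0 - x₀ 0) / ((m : ℝ) + 1), base m⟩
      (fun k ih => ⟨g k ih.1 ih.2, hgP k ih.1 ih.2⟩)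
  let z : ℕ → ℕ → ℝ := fun m k => (Z m k).1
  have hzP : ∀ m k, P k (z m k) := fun m k => (Z m k).2
  have hz0 : ∀ m, z m 0 = x₀ 0 + (y 0 - x₀ 0) / ((m : ℝ) + 1) := fun m => rfl
  have hzs : ∀ m k, z m (k + 1) = g k (z m k) (hzP m k) := fun m k => rfl
  have hzf : ∀ m k, f (z m (k + 1)) = z m k := by
    intro m k; rw [hzs m k]; exact hgf k _ _
  have hz0b : ∀ m k, T' k = 0 → z m (k + 1) ∈ Set.Icc 0 ρ := by
    intro m k h; rw [hzs m k]; exact hg0 k _ _ h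
  have hz1b : ∀ m k, T' k = 1 → z m (k + 1) ∈ Set.Ioc ρ 1 := by
    intro m k h; rw [hzs m k]; exact hg1 k _ _ h
  have hzmem : ∀ m, z m ∈ typeSet f ρ T' := by
    intro m
    exact ⟨fun k => (uIccsub k) (hzP m k).1, fun k => hzf m k,
      fun k => ⟨hz0b m k, hz1b m k⟩⟩
  -- pointwise convergence
  have hconv : ∀ k, Tendsto (fun m => z m k) atTop (𝓝 (x₀ k)) := by
    intro k
    induction k with
    | zero =>
      have h1 : Tendsto (fun m : ℕ => (1:ℝ) / ((m : ℝ) + 1)) atTop (𝓝 0) :=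
        tendsto_one_div_add_atTop_nhds_zero_nat
      have h2 : Tendsto (fun m : ℕ => x₀ 0 + (y 0 - x₀ 0) * (1 / ((m : ℝ) + 1))) atTop
          (𝓝 (x₀ 0 + (y 0 - x₀ 0) * 0)) :=
        (h1.const_mul _).const_add _
      simp only [mul_zero, add_zero] at h2
      convert h2 using 2 with m
      rw [hz0 m]
      ring
    | succ k ih =>
      rcases fin_two_cases (T' k) with h | h
      · -- left branch: inverse continuity
        have hkn : k ≠ n := by intro hkn; rw [hkn, hT'n] at h; exact absurd h (by decide)
        have hTk : T k = 0 := (hagree k hkn).symm.trans h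
        apply inv_cont_aux (hcont.mono hIccρ) hinj0
          (fun m => hz0b m k h) ((hx3 k).1 hTk)
        have he : (fun m => f (z m (k + 1))) = fun m => z m k := funext fun m => hzf m k
        rw [he, hx2 k]
        exact ih
      · -- right branch: explicit affine formula
        have he : (fun m => z m (k + 1)) = fun m => ρ + z m k * (1 - ρ) :=
          funext fun m => by rw [hzs m k]; exact hglin k _ _ h
        rw [he, hx₀lin k h]
        exact (ih.mul_const _).const_add _
  have hcl : x₀ ∈ closure (typeSet f ρ T') :=
    mem_closure_of_tendsto (tendsto_pi_nhds.2 hconv) (Eventually.of_forall hzmem)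
  refine ⟨hcl, ?_⟩
  have hB' : IsPreconnected (insert x₀ (typeSet f ρ T')) :=
    hT'conn.subset_closure (Set.subset_insert _ _)
      (Set.insert_subset hcl subset_closure)
  have hU : IsPreconnected (typeSet f ρ T ∪ insert x₀ (typeSet f ρ T')) :=
    IsPreconnected.union x₀ hx₀' (Set.mem_insert _ _) hTconn hB'
  have hEq : typeSet f ρ T ∪ insert x₀ (typeSet f ρ T') =
      typeSet f ρ T ∪ typeSet f ρ T' := by
    rw [Set.union_insert, Set.insert_eq_self]
    exact Set.mem_union_left _ hx₀'
  rw [hEq] at hU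
  exact ⟨⟨x₀, Set.mem_union_left _ hx₀'⟩, hU⟩
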